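/- For 0 < θ ≤ π/4, the function f(β) = (cos(θ − β) − sin β) / (cos(θ/2 − β) − sin(3θ/2 − β)) is (weakly) decreasing in β on the interval [θ/2, θ], and hence is maximized at β = θ/2 on this interval. -/
import Mathlib

open Real

private lemma num_eq (θ β : ℝ) :
    cos (θ - β) - sin β = 2 * sin (π/4 - θ/2) * sin (θ/2 + π/4 - β) := by
  rw [← Real.cos_pi_div_two_sub β, Real.cos_sub_cos]
  ring_nf
  rw [show θ * (1/2) + π * (-1/4) = -(θ * (-1/2) + π * (1/4)) by ring, Real.sin_neg]
  ring

private lemma den_eq (θ β : ℝ) :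
    cos (θ/2 - β) - sin (3*θ/2 - β) = 2 * sin (π/4 - θ/2) * sin (β - θ + π/4) := by
  rw [← Real.cos_pi_div_two_sub (3*θ/2 - β), Real.cos_sub_cos]
  ring_nf
  rw [show θ - β + π * (-1/4) = -(-θ + β + π * (1/4)) by ring, Real.sin_neg]
  ring

theorem stmt_3 (θ : ℝ) (h0 : 0 < θ) (h1 : θ ≤ π / 4)
    (hden : ∀ β ∈ Set.Icc (θ / 2) θ,
      0 < Real.cos (θ / 2 - β) - Real.sin (3 * θ / 2 - β)) :
    AntitoneOn (fun β => (Real.cos (θ - β) - Real.sin β) /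
        (Real.cos (θ / 2 - β) - Real.sin (3 * θ / 2 - β))) (Set.Icc (θ / 2) θ) ∧
    ∀ β ∈ Set.Icc (θ / 2) θ,
      (Real.cos (θ - β) - Real.sin β) /
          (Real.cos (θ / 2 - β) - Real.sin (3 * θ / 2 - β)) ≤
        (Real.cos (θ - θ / 2) - Real.sin (θ / 2)) /
          (Real.cos (θ / 2 - θ / 2) - Real.sin (3 * θ / 2 - θ / 2)) := by
  have hpi : (0:ℝ) < π := Real.pi_pos
  have hs : 0 < sin (π/4 - θ/2) :=
    Real.sin_pos_of_pos_of_lt_pi (by linarith) (by linarith)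
  have hanti : AntitoneOn (fun β => (Real.cos (θ - β) - Real.sin β) /
      (Real.cos (θ / 2 - β) - Real.sin (3 * θ / 2 - β))) (Set.Icc (θ / 2) θ) := by
    intro a ha b hb hab
    obtain ⟨ha1, ha2⟩ := ha
    obtain ⟨hb1, hb2⟩ := hb
    simp only
    have hDa := hden a ⟨ha1, ha2⟩
    have hDb := hden b ⟨hb1, hb2⟩
    apply div_le_div₀ _ _ hDa
    · -- denominator increasing
      rw [den_eq θ a, den_eq θ b]
      have hmono : sin (a - θ + π/4) ≤ sin (b - θ + π/4) := by
        apply Real.strictMonoOn_sin.monotoneOn ⟨by linarith, by linarith⟩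
          ⟨by linarith, by linarith⟩ (by linarith)
      nlinarith
    · -- 0 ≤ numerator at a
      rw [num_eq θ a]
      have : 0 < sin (θ/2 + π/4 - a) :=
        Real.sin_pos_of_pos_of_lt_pi (by linarith) (by linarith)
      positivity
    · -- numerator decreasing
      rw [num_eq θ a, num_eq θ b]
      have hmono : sin (θ/2 + π/4 - b) ≤ sin (θ/2 + π/4 - a) := by
        apply Real.strictMonoOn_sin.monotoneOn ⟨by linarith, by linarith⟩
          ⟨by linarith, by linarith⟩ (by linarith)
      nlinarith
  refine ⟨hanti, fun β hβ => ?_⟩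
  exact hanti ⟨le_refl _, by linarith⟩ hβ hβ.1
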